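/- Consider the prophet inequality instance on the graph G consisting of r disjoint cliques of size p, where feasible sets are exactly the subsets of cliques (sets of vertices contained in a single clique), each element independently equals 1 with probability 1/p and 0 otherwise, and r = p^p. Then the prophet's expected value, E[max over cliques of the sum of values in that clique], is at least (1 - 1/e)·p, while any online (gambler) strategy has expected value at most 2. -/
import Mathlib

open Finset

/-- Probability weight of an outcome `ω` of `r·p` independent Bernoulli(1/p) variables
arranged into `r` cliques of `p` elements each. -/
noncomputable def khwWeight (p r : ℕ) (ω : Fin r → Fin p → Bool) : ℝ :=
  ∏ j : Fin r, ∏ i : Fin p, (if ω j i then (1 : ℝ) / p else 1 - 1 / p)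

/-- Value of element `e` under outcome `ω`. -/
noncomputable def khwVal (p r : ℕ) (ω : Fin r → Fin p → Bool) (e : Fin r × Fin p) : ℝ :=
  if ω e.1 e.2 then 1 else 0

noncomputable def khwPhi (p : ℕ) (b : Bool) : ℝ := if b then 1/p else 1 - 1/p

noncomputable def khwW (p : ℕ) {ι : Type*} [Fintype ι] (τ : ι → Bool) : ℝ :=
  ∏ e, khwPhi p (τ e)


lemma khwPhi_true (p : ℕ) : khwPhi p true = 1/p := by simp [khwPhi]
lemma khwPhi_false (p : ℕ) : khwPhi p false = 1 - 1/p := by simp [khwPhi]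

lemma khwPhi_sum (p : ℕ) : khwPhi p true + khwPhi p false = 1 := by
  simp [khwPhi]

lemma khwPhi_nonneg {p : ℕ} (hp : 1 ≤ p) (b : Bool) : 0 ≤ khwPhi p b := by
  have h1 : (1:ℝ) ≤ p := by exact_mod_cast hp
  have : (1:ℝ)/p ≤ 1 := by rw [div_le_one (by linarith)]; linarith
  have h0 : (0:ℝ) ≤ 1/p := by positivity
  cases b
  · rw [khwPhi_false]; linarith
  · rw [khwPhi_true]; linarith

lemma khwPhi_le_one {p : ℕ} (hp : 1 ≤ p) (b : Bool) : khwPhi p b ≤ 1 := by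
  have h1 : (1:ℝ) ≤ p := by exact_mod_cast hp
  have : (1:ℝ)/p ≤ 1 := by rw [div_le_one (by linarith)]; linarith
  have h0 : (0:ℝ) ≤ 1/p := by positivity
  cases b
  · rw [khwPhi_false]; linarith
  · rw [khwPhi_true]; linarith


lemma khwW_nonneg {p : ℕ} (hp : 1 ≤ p) {ι : Type*} [Fintype ι] (τ : ι → Bool) :
    0 ≤ khwW p τ := Finset.prod_nonneg fun e _ => khwPhi_nonneg hp (τ e)

lemma khwW_sum (p : ℕ) (ι : Type*) [Fintype ι] [DecidableEq ι] :
    ∑ τ : ι → Bool, khwW p τ = 1 := by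
  have h := (Fintype.prod_sum (fun (_ : ι) (b : Bool) => khwPhi p b)).symm
  unfold khwW
  rw [h]
  simp [Fintype.sum_bool, khwPhi_sum]


lemma khw_marg (p : ℕ) {ι : Type*} [Fintype ι] [DecidableEq ι] (c : ι) (F : (ι → Bool) → ℝ)
    (hF : ∀ τ τ' : ι → Bool, (∀ e, e ≠ c → τ e = τ' e) → F τ = F τ') :
    ∑ τ : ι → Bool, khwW p τ * (F τ * (if τ c then 1 else 0))
      = 1/p * ∑ τ : ι → Bool, khwW p τ * F τ := by
  set E := Equiv.funSplitAt c Bool with hE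
  have hc : ∀ (b : Bool) (g : {j // j ≠ c} → Bool), E.symm (b, g) c = b := by
    intro b g; simp [hE]
  have he : ∀ (b : Bool) (g : {j // j ≠ c} → Bool) (e : ι) (h : e ≠ c),
      E.symm (b, g) e = g ⟨e, h⟩ := by
    intro b g e h; simp [hE, h]
  have hW : ∀ (b : Bool) (g : {j // j ≠ c} → Bool),
      khwW p (E.symm (b, g)) = khwPhi p b * ∏ j : {j // j ≠ c}, khwPhi p (g j) := by
    intro b g
    rw [khwW, ← Finset.mul_prod_erase univ _ (mem_univ c), hc]
    congr 1
    rw [Finset.prod_subtype (p := fun x => x ≠ c) (univ.erase c) (fun x => by simp)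
      fun e => khwPhi p (E.symm (b,g) e)]
    exact Finset.prod_congr rfl fun x _ => by rw [he b g x x.2]
  have hFeq : ∀ (g : {j // j ≠ c} → Bool) (b : Bool),
      F (E.symm (b, g)) = F (E.symm (true, g)) := by
    intro g b
    refine hF _ _ fun e h => ?_
    rw [he b g e h, he true g e h]
  have key : ∀ G : (ι → Bool) → ℝ,
      ∑ τ : ι → Bool, G τ = ∑ b : Bool, ∑ g : {j // j ≠ c} → Bool, G (E.symm (b, g)) := by
    intro G
    rw [← Equiv.sum_comp E.symm G, Fintype.sum_prod_type]
  rw [key, key (fun τ => khwW p τ * F τ)]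
  simp only [Fintype.sum_bool, hc, hW, hFeq, if_pos, if_neg (Bool.false_ne_true)]
  simp only [mul_zero, mul_one, Finset.sum_const_zero, add_zero]
  rw [← Finset.sum_add_distrib, Finset.mul_sum]
  refine Finset.sum_congr rfl fun g _ => ?_
  simp only [khwPhi]
  push_cast
  ring


lemma khwWeight_eq_prod (p r : ℕ) (ω : Fin r → Fin p → Bool) :
    khwWeight p r ω = ∏ j, khwW p (ω j) := by
  unfold khwWeight khwW khwPhi; rfl

lemma khw_factor (p r : ℕ) (f : Fin r → (Fin p → Bool) → ℝ) :
    ∑ ω : Fin r → Fin p → Bool, ∏ j, f j (ω j) = ∏ j, ∑ g : Fin p → Bool, f j g :=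
  (Fintype.prod_sum f).symm

lemma khwWeight_sum (p r : ℕ) : ∑ ω : Fin r → Fin p → Bool, khwWeight p r ω = 1 := by
  simp only [khwWeight_eq_prod]
  rw [khw_factor]
  simp [khwW_sum]

lemma khwWeight_nonneg {p : ℕ} (hp : 1 ≤ p) (r : ℕ) (ω : Fin r → Fin p → Bool) :
    0 ≤ khwWeight p r ω := by
  rw [khwWeight_eq_prod]; exact Finset.prod_nonneg fun j _ => khwW_nonneg hp _

lemma khw_part1 (p : ℕ) (hp2 : 2 ≤ p) :
    (1 - 1 / Real.exp 1) * p ≤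
      ∑ ω : Fin (p ^ p) → Fin p → Bool,
        khwWeight p (p ^ p) ω * ⨆ j : Fin (p ^ p), ∑ i : Fin p, khwVal p (p ^ p) ω (j, i) := by
  set n := p ^ p with hn
  have hp1 : 1 ≤ p := le_trans one_le_two hp2
  have hppos : (0:ℝ) < p := by exact_mod_cast lt_of_lt_of_le Nat.zero_lt_two hp2
  have hnpos : 0 < n := by positivity
  have : Nonempty (Fin n) := ⟨⟨0, hnpos⟩⟩
  set q : (Fin n → Fin p → Bool) → ℝ :=
    fun ω => ∏ j, (if ∀ i, ω j i then (0:ℝ) else 1) with hq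
  -- value of q
  have hq0 : ∀ ω, (∃ j, ∀ i, ω j i) → q ω = 0 := by
    rintro ω ⟨j, hj⟩
    exact Finset.prod_eq_zero (mem_univ j) (by simp [hj])
  have hq1 : ∀ ω, ¬(∃ j, ∀ i, ω j i) → q ω = 1 := by
    intro ω hne
    push_neg at hne
    refine Finset.prod_eq_one fun j _ => ?_
    have hnall : ¬ ∀ i, ω j i := by
      obtain ⟨i, hi⟩ := hne j; exact fun hall => hi (hall i)
    rw [if_neg hnall]
  -- pointwise bound
  have hpt : ∀ ω : Fin n → Fin p → Bool,
      (p:ℝ) * (1 - q ω) ≤ ⨆ j : Fin n, ∑ i : Fin p, khwVal p n ω (j, i) := by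
    intro ω
    by_cases hex : ∃ j, ∀ i, ω j i
    · obtain ⟨j, hj⟩ := hex
      rw [hq0 ω ⟨j, hj⟩]
      have hs : ∑ i : Fin p, khwVal p n ω (j, i) = p := by
        simp [khwVal, hj]
      calc (p:ℝ) * (1 - 0) = ∑ i : Fin p, khwVal p n ω (j, i) := by rw [hs]; ring
        _ ≤ _ := le_ciSup (f := fun j : Fin n => ∑ i : Fin p, khwVal p n ω (j, i)) (Finite.bddAbove_range _) j
    · rw [hq1 ω hex]
      have h0 : (0:ℝ) ≤ ∑ i : Fin p, khwVal p n ω (⟨0, hnpos⟩, i) :=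
        Finset.sum_nonneg fun i _ => by unfold khwVal; positivity
      calc (p:ℝ) * (1 - 1) = 0 := by ring
        _ ≤ _ := le_trans h0 (le_ciSup (f := fun j : Fin n => ∑ i : Fin p, khwVal p n ω (j, i)) (Finite.bddAbove_range _) ⟨0, hnpos⟩)
  -- expected q
  have hEq : ∑ ω : Fin n → Fin p → Bool, khwWeight p n ω * q ω
      = (1 - (1/(p:ℝ))^p) ^ n := by
    have : ∀ ω : Fin n → Fin p → Bool, khwWeight p n ω * q ω
        = ∏ j, (khwW p (ω j) * (if ∀ i, ω j i then (0:ℝ) else 1)) := by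
      intro ω; rw [khwWeight_eq_prod, hq, ← Finset.prod_mul_distrib]
    simp only [this]
    refine (khw_factor p n fun j g => khwW p g * (if ∀ i, g i then (0:ℝ) else 1)).trans ?_
    have hfac : ∀ j : Fin n, ∑ g : Fin p → Bool, khwW p g * (if ∀ i, g i then (0:ℝ) else 1)
        = 1 - (1/(p:ℝ))^p := by
      intro j
      have h1 : ∀ g : Fin p → Bool, khwW p g * (if ∀ i, g i then (0:ℝ) else 1)
          = khwW p g - khwW p g * (if ∀ i, g i then (1:ℝ) else 0) := by
        intro g; by_cases h : ∀ i, g i <;> simp [h]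
      simp only [h1, Finset.sum_sub_distrib]
      rw [khwW_sum]
      have h2 : ∑ g : Fin p → Bool, khwW p g * (if ∀ i, g i then (1:ℝ) else 0)
          = (1/(p:ℝ))^p := by
        rw [Fintype.sum_eq_single (fun _ => true)]
        · simp [khwW, khwPhi_true]
        · intro g hg
          have : ¬ ∀ i, g i := by
            intro hall; exact hg (funext fun i => hall i)
          simp [this]
      rw [h2]
    rw [Finset.prod_congr rfl fun j _ => hfac j, Finset.prod_const, Finset.card_univ,
      Fintype.card_fin]
  -- main chain
  have step1 : (p:ℝ) * (1 - (1 - (1/(p:ℝ))^p) ^ n)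
      ≤ ∑ ω : Fin n → Fin p → Bool,
          khwWeight p n ω * ⨆ j : Fin n, ∑ i : Fin p, khwVal p n ω (j, i) := by
    have := Finset.sum_le_sum (s := (univ : Finset (Fin n → Fin p → Bool)))
      (fun ω _ => mul_le_mul_of_nonneg_left (hpt ω) (khwWeight_nonneg hp1 n ω))
    have e1 : ∑ ω : Fin n → Fin p → Bool, khwWeight p n ω * ((p:ℝ) * (1 - q ω))
        = (p:ℝ) * (∑ ω : Fin n → Fin p → Bool, khwWeight p n ω)
          - (p:ℝ) * ∑ ω : Fin n → Fin p → Bool, khwWeight p n ω * q ω := by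
      rw [Finset.mul_sum, Finset.mul_sum, ← Finset.sum_sub_distrib]
      exact Finset.sum_congr rfl fun ω _ => by ring
    rw [khwWeight_sum, hEq] at e1
    calc (p:ℝ) * (1 - (1 - (1/(p:ℝ))^p) ^ n)
        = ∑ ω : Fin n → Fin p → Bool, khwWeight p n ω * ((p:ℝ) * (1 - q ω)) := by
          rw [e1]; ring
      _ ≤ _ := this
  refine le_trans ?_ step1
  -- the analytic inequality
  have hx : (1/(p:ℝ))^p = ((n:ℝ))⁻¹ := by
    rw [hn]; push_cast; rw [one_div, inv_pow]
  have hxpos : (0:ℝ) < ((n:ℝ))⁻¹ := by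
    have : (0:ℝ) < n := by exact_mod_cast hnpos
    positivity
  have hxle : ((n:ℝ))⁻¹ ≤ 1 := by
    rw [inv_le_one_iff₀]; right; exact_mod_cast hnpos
  have hexp : (1 - ((n:ℝ))⁻¹) ≤ Real.exp (-((n:ℝ))⁻¹) := by
    have := Real.add_one_le_exp (-((n:ℝ))⁻¹)
    linarith
  have hpow : (1 - ((n:ℝ))⁻¹) ^ n ≤ Real.exp (-((n:ℝ))⁻¹) ^ n :=
    pow_le_pow_left₀ (by linarith) hexp n
  have hE : Real.exp (-((n:ℝ))⁻¹) ^ n = Real.exp (-1) := by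
    have hne0 : (n:ℝ) ≠ 0 := by
      have : (0:ℝ) < n := by exact_mod_cast hnpos
      linarith
    rw [← Real.exp_nat_mul]
    congr 1
    rw [mul_neg, mul_inv_cancel₀ hne0]
  have hfin : (1 - (1/(p:ℝ))^p) ^ n ≤ 1 / Real.exp 1 := by
    rw [hx]
    calc (1 - ((n:ℝ))⁻¹) ^ n ≤ Real.exp (-1) := by rw [← hE]; exact hpow
      _ = 1 / Real.exp 1 := by rw [Real.exp_neg]; ring
  have : (1 - 1 / Real.exp 1) ≤ (1 - (1 - (1/(p:ℝ))^p) ^ n) := by linarith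
  calc (1 - 1 / Real.exp 1) * (p:ℝ) ≤ (1 - (1 - (1/(p:ℝ))^p) ^ n) * p :=
        mul_le_mul_of_nonneg_right this (le_of_lt hppos)
    _ = (p:ℝ) * (1 - (1 - (1/(p:ℝ))^p) ^ n) := by ring


lemma khwWeight_curry (p r : ℕ) (τ : Fin r × Fin p → Bool) :
    khwWeight p r (Function.curry τ) = khwW p τ := by
  rw [khwWeight_eq_prod]
  unfold khwW
  rw [Fintype.prod_prod_type]
  rfl

lemma khw_sum_curry (p r : ℕ) (H : (Fin r → Fin p → Bool) → ℝ) :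
    ∑ ω : Fin r → Fin p → Bool, H ω = ∑ τ : Fin r × Fin p → Bool, H (Function.curry τ) :=
  (Equiv.sum_comp (Equiv.curry (Fin r) (Fin p) Bool) H).symm

lemma khw_marg_curried (p r : ℕ) (c : Fin r × Fin p) (F : (Fin r → Fin p → Bool) → ℝ)
    (hF : ∀ ω ω' : Fin r → Fin p → Bool,
      (∀ e : Fin r × Fin p, e ≠ c → ω e.1 e.2 = ω' e.1 e.2) → F ω = F ω') :
    ∑ ω : Fin r → Fin p → Bool, khwWeight p r ω * (F ω * (if ω c.1 c.2 then 1 else 0))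
      = 1/p * ∑ ω : Fin r → Fin p → Bool, khwWeight p r ω * F ω := by
  have key := khw_marg p (ι := Fin r × Fin p) c (fun τ => F (Function.curry τ))
    (fun τ τ' h => hF _ _ (fun e he => h e he))
  have t1 := khw_sum_curry p r (fun ω => khwWeight p r ω * (F ω * (if ω c.1 c.2 then 1 else 0)))
  have t2 := khw_sum_curry p r (fun ω => khwWeight p r ω * F ω)
  rw [t1, t2]
  simp only [khwWeight_curry]
  exact key


lemma khw_part2 (p n : ℕ) (hp2 : 2 ≤ p)
    (σ : Fin n × Fin p → ℕ) (hσ : Function.Injective σ)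
    (A : (Fin n → Fin p → Bool) → Finset (Fin n × Fin p))
    (hclique : ∀ ω, ∃ j, ∀ e ∈ A ω, e.1 = j)
    (hadapt : ∀ ω ω' e, (∀ e', σ e' ≤ σ e → ω e'.1 e'.2 = ω' e'.1 e'.2) →
      (e ∈ A ω ↔ e ∈ A ω')) :
    ∑ ω : Fin n → Fin p → Bool,
      khwWeight p n ω * ∑ e ∈ A ω, khwVal p n ω e ≤ 2 := by
  classical
  have hp1 : 1 ≤ p := le_trans one_le_two hp2
  have hppos : (0:ℝ) < p := by exact_mod_cast lt_of_lt_of_le Nat.zero_lt_two hp2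
  set cond : (Fin n × Fin p) → (Fin n → Fin p → Bool) → Prop :=
    fun e₀ ω => e₀ ∈ A ω ∧ ∀ e, σ e < σ e₀ → e ∉ A ω with hcond
  set G : (Fin n × Fin p) → (Fin n → Fin p → Bool) → ℝ :=
    fun e₀ ω => if cond e₀ ω then 1 else 0 with hG
  set S : Fin n × Fin p → Finset (Fin p) :=
    fun e₀ => univ.filter (fun i => σ e₀ < σ (e₀.1, i)) with hS
  have hGnonneg : ∀ e₀ ω, 0 ≤ G e₀ ω := by
    intro e₀ ω; rw [hG]; dsimp only; split <;> norm_num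
  have hGle : ∀ e₀ ω, G e₀ ω ≤ 1 := by
    intro e₀ ω; rw [hG]; dsimp only; split <;> norm_num
  have hXnonneg : ∀ (ω : Fin n → Fin p → Bool) e, 0 ≤ khwVal p n ω e := by
    intro ω e; unfold khwVal; split <;> norm_num
  have hXle : ∀ (ω : Fin n → Fin p → Bool) e, khwVal p n ω e ≤ 1 := by
    intro ω e; unfold khwVal; split <;> norm_num
  -- pointwise bound
  have pointwise : ∀ ω : Fin n → Fin p → Bool, ∑ e ∈ A ω, khwVal p n ω e ≤
      (if (A ω).Nonempty then (1:ℝ) else 0) +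
        ∑ e₀ : Fin n × Fin p, G e₀ ω * ∑ i ∈ S e₀, khwVal p n ω (e₀.1, i) := by
    intro ω
    rcases (A ω).eq_empty_or_nonempty with hemp | hne
    · have h2 : (0:ℝ) ≤ ∑ e₀ : Fin n × Fin p, G e₀ ω * ∑ i ∈ S e₀, khwVal p n ω (e₀.1, i) :=
        Finset.sum_nonneg fun e₀ _ => mul_nonneg (hGnonneg e₀ ω)
          (Finset.sum_nonneg fun i _ => hXnonneg ω _)
      rw [hemp, Finset.sum_empty, if_neg (by simp), zero_add]
      exact h2
    · obtain ⟨e₀, he₀, hmin⟩ := Finset.exists_min_image (A ω) σ hne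
      obtain ⟨j, hj⟩ := hclique ω
      have hj0 : e₀.1 = j := hj e₀ he₀
      have hcondtrue : cond e₀ ω := by
        refine ⟨he₀, fun e hlt hmem => ?_⟩
        have := hmin e hmem; omega
      have hsplit : ∑ e ∈ A ω, khwVal p n ω e
          = khwVal p n ω e₀ + ∑ e ∈ (A ω).erase e₀, khwVal p n ω e :=
        (Finset.add_sum_erase _ _ he₀).symm
      have htail : ∑ e ∈ (A ω).erase e₀, khwVal p n ω e
          ≤ ∑ i ∈ S e₀, khwVal p n ω (e₀.1, i) := by
        have hrw : ∀ e ∈ (A ω).erase e₀, khwVal p n ω e = khwVal p n ω (e₀.1, e.2) := by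
          intro e he
          have h1 : e.1 = e₀.1 := (hj e (Finset.mem_of_mem_erase he)).trans hj0.symm
          rw [show ((e₀.1 : Fin n), e.2) = e from Prod.ext h1.symm rfl]
        rw [Finset.sum_congr rfl hrw]
        have hinj : ∀ x ∈ (A ω).erase e₀, ∀ y ∈ (A ω).erase e₀,
            Prod.snd x = Prod.snd y → x = y := by
          intro x hx y hy hxy
          have hx1 : x.1 = j := hj x (Finset.mem_of_mem_erase hx)
          have hy1 : y.1 = j := hj y (Finset.mem_of_mem_erase hy)
          exact Prod.ext (hx1.trans hy1.symm) hxy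
        have him : ∑ i ∈ ((A ω).erase e₀).image Prod.snd, khwVal p n ω (e₀.1, i)
            = ∑ x ∈ (A ω).erase e₀, khwVal p n ω (e₀.1, x.2) := Finset.sum_image hinj
        rw [← him]
        refine Finset.sum_le_sum_of_subset_of_nonneg ?_ fun i _ _ => hXnonneg ω _
        intro i hi
        obtain ⟨e, he, hei⟩ := Finset.mem_image.mp hi
        have heA : e ∈ A ω := Finset.mem_of_mem_erase he
        have hene : e ≠ e₀ := Finset.ne_of_mem_erase he
        have h1 : e.1 = e₀.1 := (hj e heA).trans hj0.symm
        have hee : ((e₀.1 : Fin n), i) = e := Prod.ext h1.symm hei.symm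
        have hlt : σ e₀ < σ e := by
          have hle := hmin e heA
          have : σ e ≠ σ e₀ := fun h => hene (hσ h)
          omega
        rw [hS]
        simp only [Finset.mem_filter, Finset.mem_univ, true_and]
        rw [hee]
        exact hlt
      have hR1 : G e₀ ω * ∑ i ∈ S e₀, khwVal p n ω (e₀.1, i)
          ≤ ∑ e₀' : Fin n × Fin p, G e₀' ω * ∑ i ∈ S e₀', khwVal p n ω (e₀'.1, i) :=
        Finset.single_le_sum (f := fun e₀' => G e₀' ω * ∑ i ∈ S e₀', khwVal p n ω (e₀'.1, i))
          (fun e₀' _ => mul_nonneg (hGnonneg e₀' ω) (Finset.sum_nonneg fun i _ => hXnonneg ω _))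
          (mem_univ e₀)
      have hGe : G e₀ ω = 1 := by rw [hG]; exact if_pos hcondtrue
      rw [hGe, one_mul] at hR1
      rw [if_pos hne, hsplit]
      have := hXle ω e₀
      linarith
  -- uniqueness: sum of G over e₀ is at most 1
  have hGsum : ∀ ω : Fin n → Fin p → Bool, ∑ e₀ : Fin n × Fin p, G e₀ ω ≤ 1 := by
    intro ω
    by_cases hex : ∃ e₀, cond e₀ ω
    · obtain ⟨e₀, hc⟩ := hex
      have huniq : ∀ e₁, cond e₁ ω → e₁ = e₀ := by
        intro e₁ hc1
        by_contra hne
        have hσne : σ e₁ ≠ σ e₀ := fun h => hne (hσ h)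
        rcases lt_or_gt_of_ne hσne with h | h
        · exact hc.2 e₁ h hc1.1
        · exact hc1.2 e₀ h hc.1
      rw [Fintype.sum_eq_single e₀ (fun e₁ h1 => by
        rw [hG]; exact if_neg (fun hc1 => h1 (huniq e₁ hc1)))]
      rw [hG]; dsimp only; rw [if_pos hc]
    · push_neg at hex
      rw [Finset.sum_eq_zero fun e₀ _ => by rw [hG]; exact if_neg (hex e₀)]
      norm_num
  -- adaptedness gives independence of later coordinates
  have hF : ∀ (e₀ : Fin n × Fin p) (i : Fin p), i ∈ S e₀ →
      ∀ ω ω' : Fin n → Fin p → Bool, (∀ e : Fin n × Fin p, e ≠ (e₀.1, i) → ω e.1 e.2 = ω' e.1 e.2) →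
        G e₀ ω = G e₀ ω' := by
    intro e₀ i hi ω ω' h
    have hlt : σ e₀ < σ (e₀.1, i) := by
      rw [hS] at hi; simpa using hi
    have hmem : ∀ e, σ e ≤ σ e₀ → (e ∈ A ω ↔ e ∈ A ω') := by
      intro e hle
      refine hadapt ω ω' e fun e' hle' => h e' fun hc => ?_
      rw [hc] at hle'
      omega
    have hiff : cond e₀ ω ↔ cond e₀ ω' := by
      rw [hcond]
      constructor
      · rintro ⟨h1, h2⟩
        exact ⟨(hmem e₀ le_rfl).mp h1,
          fun e hlt' he => h2 e hlt' ((hmem e (le_of_lt hlt')).mpr he)⟩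
      · rintro ⟨h1, h2⟩
        exact ⟨(hmem e₀ le_rfl).mpr h1,
          fun e hlt' he => h2 e hlt' ((hmem e (le_of_lt hlt')).mp he)⟩
    rw [hG]; dsimp only
    by_cases hcω : cond e₀ ω
    · rw [if_pos hcω, if_pos (hiff.mp hcω)]
    · rw [if_neg hcω, if_neg (fun hc => hcω (hiff.mpr hc))]
  -- expectation computation
  have hW := khwWeight_nonneg hp1 n
  have main : ∑ ω : Fin n → Fin p → Bool, khwWeight p n ω * ∑ e ∈ A ω, khwVal p n ω e
      ≤ ∑ ω : Fin n → Fin p → Bool, khwWeight p n ω *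
        ((if (A ω).Nonempty then (1:ℝ) else 0) +
          ∑ e₀ : Fin n × Fin p, G e₀ ω * ∑ i ∈ S e₀, khwVal p n ω (e₀.1, i)) :=
    Finset.sum_le_sum fun ω _ => mul_le_mul_of_nonneg_left (pointwise ω) (hW ω)
  have hB1 : ∑ ω : Fin n → Fin p → Bool, khwWeight p n ω * (if (A ω).Nonempty then (1:ℝ) else 0) ≤ 1 := by
    calc ∑ ω : Fin n → Fin p → Bool, khwWeight p n ω * (if (A ω).Nonempty then (1:ℝ) else 0)
        ≤ ∑ ω : Fin n → Fin p → Bool, khwWeight p n ω :=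
          Finset.sum_le_sum fun ω _ => mul_le_of_le_one_right (hW ω) (by split <;> norm_num)
      _ = 1 := khwWeight_sum p n
  -- the main term
  have hmarg : ∀ (e₀ : Fin n × Fin p), ∀ i ∈ S e₀,
      ∑ ω : Fin n → Fin p → Bool, khwWeight p n ω * (G e₀ ω * khwVal p n ω (e₀.1, i))
        = 1/p * ∑ ω : Fin n → Fin p → Bool, khwWeight p n ω * G e₀ ω := by
    intro e₀ i hi
    exact khw_marg_curried p n (e₀.1, i) (G e₀) (hF e₀ i hi)
  have hEnonneg : ∀ e₀ : Fin n × Fin p, 0 ≤ ∑ ω : Fin n → Fin p → Bool, khwWeight p n ω * G e₀ ω :=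
    fun e₀ => Finset.sum_nonneg fun ω _ => mul_nonneg (hW ω) (hGnonneg e₀ ω)
  have hB2 : ∑ ω : Fin n → Fin p → Bool, khwWeight p n ω *
      ∑ e₀ : Fin n × Fin p, G e₀ ω * ∑ i ∈ S e₀, khwVal p n ω (e₀.1, i) ≤ 1 := by
    have swap1 : ∑ ω : Fin n → Fin p → Bool, khwWeight p n ω *
        ∑ e₀ : Fin n × Fin p, G e₀ ω * ∑ i ∈ S e₀, khwVal p n ω (e₀.1, i)
        = ∑ e₀ : Fin n × Fin p, ∑ i ∈ S e₀,
            ∑ ω : Fin n → Fin p → Bool, khwWeight p n ω * (G e₀ ω * khwVal p n ω (e₀.1, i)) := by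
      simp only [Finset.mul_sum]
      rw [Finset.sum_comm]
      exact Finset.sum_congr rfl fun e₀ _ => Finset.sum_comm
    rw [swap1]
    have step : ∀ e₀ : Fin n × Fin p,
        ∑ i ∈ S e₀, ∑ ω : Fin n → Fin p → Bool,
            khwWeight p n ω * (G e₀ ω * khwVal p n ω (e₀.1, i))
          = ((S e₀).card : ℝ) * (1/p * ∑ ω : Fin n → Fin p → Bool, khwWeight p n ω * G e₀ ω) := by
      intro e₀
      rw [Finset.sum_congr rfl (hmarg e₀), Finset.sum_const, nsmul_eq_mul]
    calc ∑ e₀ : Fin n × Fin p, ∑ i ∈ S e₀, ∑ ω : Fin n → Fin p → Bool,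
            khwWeight p n ω * (G e₀ ω * khwVal p n ω (e₀.1, i))
        = ∑ e₀ : Fin n × Fin p, ((S e₀).card : ℝ) *
            (1/p * ∑ ω : Fin n → Fin p → Bool, khwWeight p n ω * G e₀ ω) :=
          Finset.sum_congr rfl fun e₀ _ => step e₀
      _ ≤ ∑ e₀ : Fin n × Fin p, ∑ ω : Fin n → Fin p → Bool, khwWeight p n ω * G e₀ ω := by
          refine Finset.sum_le_sum fun e₀ _ => ?_
          have hcard : ((S e₀).card : ℝ) ≤ p := by
            have h : (S e₀).card ≤ p := le_trans (Finset.card_le_univ _) (by simp)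
            exact_mod_cast h
          have hE := hEnonneg e₀
          have hpos : (0:ℝ) ≤ 1/p * ∑ ω : Fin n → Fin p → Bool, khwWeight p n ω * G e₀ ω :=
            mul_nonneg (by positivity) hE
          calc ((S e₀).card : ℝ) *
                (1/p * ∑ ω : Fin n → Fin p → Bool, khwWeight p n ω * G e₀ ω)
              ≤ (p:ℝ) * (1/p * ∑ ω : Fin n → Fin p → Bool, khwWeight p n ω * G e₀ ω) :=
                mul_le_mul_of_nonneg_right hcard hpos
            _ = ∑ ω : Fin n → Fin p → Bool, khwWeight p n ω * G e₀ ω := by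
                field_simp
      _ = ∑ ω : Fin n → Fin p → Bool, khwWeight p n ω * ∑ e₀ : Fin n × Fin p, G e₀ ω := by
          rw [Finset.sum_comm]
          exact Finset.sum_congr rfl fun ω _ => (Finset.mul_sum _ _ _).symm
      _ ≤ ∑ ω : Fin n → Fin p → Bool, khwWeight p n ω * 1 :=
          Finset.sum_le_sum fun ω _ => mul_le_mul_of_nonneg_left (hGsum ω) (hW ω)
      _ = 1 := by
          simp only [mul_one]
          exact khwWeight_sum p n
  calc ∑ ω : Fin n → Fin p → Bool, khwWeight p n ω * ∑ e ∈ A ω, khwVal p n ω e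
      ≤ ∑ ω : Fin n → Fin p → Bool, khwWeight p n ω *
        ((if (A ω).Nonempty then (1:ℝ) else 0) +
          ∑ e₀ : Fin n × Fin p, G e₀ ω * ∑ i ∈ S e₀, khwVal p n ω (e₀.1, i)) := main
    _ = (∑ ω : Fin n → Fin p → Bool, khwWeight p n ω * (if (A ω).Nonempty then (1:ℝ) else 0))
        + ∑ ω : Fin n → Fin p → Bool, khwWeight p n ω *
            ∑ e₀ : Fin n × Fin p, G e₀ ω * ∑ i ∈ S e₀, khwVal p n ω (e₀.1, i) := by
        rw [← Finset.sum_add_distrib]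
        exact Finset.sum_congr rfl fun ω _ => by ring
    _ ≤ 1 + 1 := add_le_add hB1 hB2
    _ = 2 := by norm_num


/-- In the Kleinberg–Weinberg instance with `r = p^p` cliques of size `p`, feasible sets
being subsets of single cliques, and i.i.d. Bernoulli(1/p) values: the prophet's expected
value is at least `(1 - 1/e)·p`, while every online (adapted, feasible) strategy—over any
arrival order—has expected value at most `2`. -/
theorem stmt18 (p : ℕ) (hp : p.Prime) :
    ((1 - 1 / Real.exp 1) * p ≤
      ∑ ω : Fin (p ^ p) → Fin p → Bool,
        khwWeight p (p ^ p) ω * ⨆ j : Fin (p ^ p), ∑ i : Fin p, khwVal p (p ^ p) ω (j, i)) ∧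
    ∀ σ : Fin (p ^ p) × Fin p → ℕ, Function.Injective σ →
      ∀ A : (Fin (p ^ p) → Fin p → Bool) → Finset (Fin (p ^ p) × Fin p),
        (∀ ω, ∃ j, ∀ e ∈ A ω, e.1 = j) →
        (∀ ω ω' e, (∀ e', σ e' ≤ σ e → ω e'.1 e'.2 = ω' e'.1 e'.2) →
          (e ∈ A ω ↔ e ∈ A ω')) →
        ∑ ω : Fin (p ^ p) → Fin p → Bool,
          khwWeight p (p ^ p) ω * ∑ e ∈ A ω, khwVal p (p ^ p) ω e ≤ 2 := by
  have hp2 : 2 ≤ p := hp.two_le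
  exact ⟨khw_part1 p hp2, fun σ hσ A hclique hadapt =>
    khw_part2 p (p ^ p) hp2 σ hσ A hclique hadapt⟩
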